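/- Let (X, ↪, P) be a primal-proximity space with P = {A ⊆ X : A ≠ X}. Then the operator A ↦ A^↪ := {x ∈ X : {x} ↪ A} is a Kuratowski closure operator: (1) ∅^↪ = ∅; (2) A ⊆ A^↪ for every A ⊆ X; (3) (A ∪ B)^↪ = A^↪ ∪ B^↪ for all A, B ⊆ X; (4) (A^↪)^↪ = A^↪ for every A ⊆ X. -/
import Mathlib


open Set

/-- A collection `P` of subsets of `X` is a *primal* on `X`. -/
def IsPrimalOn {X : Type*} (P : Set (Set X)) : Prop :=
  (Set.univ : Set X) ∉ P ∧
  (∀ A B : Set X, A ∈ P → B ⊆ A → B ∈ P) ∧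
  (∀ A B : Set X, A ∩ B ∈ P → A ∈ P ∨ B ∈ P)

/-- A binary relation `r` on the power set of `X` is a *primal-proximity* with
respect to a primal `P` on `X`. -/
def IsPrimalProximity {X : Type*} (P : Set (Set X)) (r : Set X → Set X → Prop) : Prop :=
  (∀ A B : Set X, r A B → r B A) ∧
  (∀ A B C : Set X, r A (B ∪ C) ↔ (r A B ∨ r A C)) ∧
  (∀ A : Set X, Aᶜ ∉ P → ∀ B : Set X, ¬ r A B) ∧
  (∀ A B : Set X, (A ∩ B)ᶜ ∈ P → r A B) ∧
  (∀ A B : Set X, ¬ r A B →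
    ∃ C D : Set X, ¬ r A Cᶜ ∧ ¬ r Dᶜ B ∧ (C ∩ D)ᶜ ∉ P)

/-- The point-primal proximity of `A`: `A^↪ = {x | {x} ↪ A}`. -/
def ppp {X : Type*} (r : Set X → Set X → Prop) (A : Set X) : Set X :=
  {x : X | r {x} A}

theorem stmt_16 {X : Type*} [Nonempty X] (P : Set (Set X)) (r : Set X → Set X → Prop)
    (hP : IsPrimalOn P) (hr : IsPrimalProximity P r)
    (hPuniv : P = {A : Set X | A ≠ Set.univ}) :
    (ppp r (∅ : Set X) = ∅) ∧
    (∀ A : Set X, A ⊆ ppp r A) ∧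
    (∀ A B : Set X, ppp r (A ∪ B) = ppp r A ∪ ppp r B) ∧
    (∀ A : Set X, ppp r (ppp r A) = ppp r A) := by
  obtain ⟨hsym, hun, h3, h4, h5⟩ := hr
  have hPmem : ∀ A : Set X, A ∈ P ↔ A ≠ Set.univ := by
    intro A; rw [hPuniv]; rfl
  have mono : ∀ A B B' : Set X, r A B → B ⊆ B' → r A B' := by
    intro A B B' h hBB'
    have h2 := (hun A B B').mpr (Or.inl h)
    rwa [Set.union_eq_right.mpr hBB'] at h2
  have sub : ∀ A : Set X, A ⊆ ppp r A := by
    intro A x hx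
    apply h4
    rw [hPmem]
    intro hcomp
    rw [Set.compl_univ_iff] at hcomp
    exact absurd hcomp (Set.nonempty_iff_ne_empty.mp ⟨x, rfl, hx⟩)
  refine ⟨?_, sub, ?_, ?_⟩
  · ext x
    simp only [ppp, Set.mem_setOf_eq, Set.mem_empty_iff_false, iff_false]
    intro h
    exact h3 ∅ (by rw [hPmem]; simp) {x} (hsym _ _ h)
  · intro A B
    ext x
    exact hun {x} A B
  · intro A
    apply Set.Subset.antisymm _ (sub _)
    intro x hx
    by_contra hxA
    obtain ⟨C, D, hC, hD, hCD⟩ := h5 {x} A hxA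
    rw [hPmem, not_not, Set.compl_univ_iff] at hCD
    have hDC : D ⊆ Cᶜ := Set.subset_compl_iff_disjoint_left.mpr
      (Set.disjoint_iff_inter_eq_empty.mpr hCD)
    have hsubC : ppp r A ⊆ Cᶜ := by
      intro y hy
      rcases (em (y ∈ D)) with hyD | hyD
      · exact hDC hyD
      · exact absurd (hsym _ _ (mono A {y} Dᶜ (hsym _ _ hy)
          (Set.singleton_subset_iff.mpr hyD))) hD
    exact hC (mono _ _ _ hx hsubC)
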